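/- Let Q be a finite simple graph with q vertices and C a simple graph. Then there exists a graph embedding of Q into C (an injective vertex map that both preserves and reflects adjacency, i.e., an isomorphism of Q onto an induced subgraph of C) if and only if the modular product of Q and C contains a clique of size q. -/

import Mathlib

open SimpleGraph

/-- The modular product of two simple graphs `G` and `H`: vertices are pairs `(u, v)`,
and `(u, v)` is adjacent to `(u', v')` exactly when `u ≠ u'`, `v ≠ v'`, and
`u` is adjacent to `u'` in `G` if and only if `v` is adjacent to `v'` in `H`. -/
def modularProduct {V W : Type*} (G : SimpleGraph V) (H : SimpleGraph W) :
    SimpleGraph (V × W) where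
  Adj p q := p.1 ≠ q.1 ∧ p.2 ≠ q.2 ∧ (G.Adj p.1 q.1 ↔ H.Adj p.2 q.2)
  symm := by
    constructor
    rintro p q ⟨h1, h2, h3⟩
    exact ⟨h1.symm, h2.symm, by rw [G.adj_comm, H.adj_comm]; exact h3⟩
  loopless := by constructor; rintro p ⟨h1, -, -⟩; exact h1 rfl

/-- A finite query graph `Q` with `q` vertices embeds into a corpus graph `C` (as an induced
subgraph) iff the modular product of `Q` and `C` contains a clique of size `q`. -/
theorem embedding_iff_modularProduct_clique {V W : Type*} [Fintype V]
    (Q : SimpleGraph V) (C : SimpleGraph W) (q : ℕ) (hq : Fintype.card V = q) :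
    Nonempty (Q ↪g C) ↔ ∃ K : Finset (V × W), (modularProduct Q C).IsNClique q K := by
  classical
  constructor
  · rintro ⟨f⟩
    refine ⟨Finset.univ.image (fun v => (v, f v)), ?_, ?_⟩
    · intro p hp p' hp' hne
      simp only [Finset.coe_image, Set.mem_image] at hp hp'
      obtain ⟨v, -, rfl⟩ := hp
      obtain ⟨v', -, rfl⟩ := hp'
      have hv : v ≠ v' := by rintro rfl; exact hne rfl
      exact ⟨hv, fun h => hv (f.injective h), by simp [f.map_adj_iff]⟩
    · rw [Finset.card_image_of_injective _ (fun a b h => (Prod.mk.injEq _ _ _ _).mp h |>.1)]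
      simpa using hq
  · rintro ⟨K, hK⟩
    have hinj1 : ∀ p ∈ K, ∀ p' ∈ K, p.1 = p'.1 → p = p' := by
      intro p hp p' hp' h
      by_contra hne
      exact (hK.isClique (Finset.mem_coe.mpr hp) (Finset.mem_coe.mpr hp') hne).1 h
    have himg : K.image Prod.fst = Finset.univ := by
      apply Finset.eq_univ_of_card
      rw [Finset.card_image_of_injOn hinj1, hK.card_eq, hq]
    have hsurj : ∀ v : V, ∃ p, p ∈ K ∧ p.1 = v := by
      intro v
      have := himg ▸ Finset.mem_univ v
      simpa [Finset.mem_image] using this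
    choose g hgK hg1 using hsurj
    have hgne : ∀ {v v' : V}, v ≠ v' → g v ≠ g v' := by
      intro v v' hvv h
      exact hvv (by rw [← hg1 v, ← hg1 v', h])
    refine ⟨⟨⟨fun v => (g v).2, ?_⟩, ?_⟩⟩
    · intro v v' h
      by_contra hvv
      exact (hK.isClique (Finset.mem_coe.mpr (hgK v)) (Finset.mem_coe.mpr (hgK v'))
        (hgne hvv)).2.1 h
    · intro v v'
      rcases eq_or_ne v v' with rfl | hvv
      · simp
      · have := (hK.isClique (Finset.mem_coe.mpr (hgK v)) (Finset.mem_coe.mpr (hgK v'))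
          (hgne hvv)).2.2
        rw [hg1 v, hg1 v'] at this
        exact this.symm
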